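/- Any list of distinct integers can be partitioned into L increasing subsequences, where L is the length of its longest strictly decreasing subsequence. Equivalently, there exists a coloring of positions with L colors such that each color class forms an increasing subsequence. -/

import Mathlib

def LDS (a : List ℤ) : ℕ :=
  ((a.sublists.filter (fun l => decide (l.IsChain (· > ·)))).map List.length).foldr max 0

-- g a i = length of longest strictly decreasing subsequence ending at index i
def gaux (a : List ℤ) (i : ℕ) : ℕ :=
  1 + (((List.range i).filter (fun j => decide (a.getD j 0 > a.getD i 0))).attach.map
      (fun j => gaux a j.1)).foldr max 0
termination_by i
decreasing_by
  have h := j.2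
  simp only [List.mem_filter, List.mem_range] at h
  exact h.1

lemma mem_le_foldr_max {l : List ℕ} {x : ℕ} (h : x ∈ l) : x ≤ l.foldr max 0 := by
  induction l with
  | nil => simp at h
  | cons y ys ih =>
    rcases List.mem_cons.1 h with rfl | h
    · exact le_max_left _ _
    · exact le_trans (ih h) (le_max_right _ _)

lemma foldr_max_mem {l : List ℕ} (h : l ≠ []) : l.foldr max 0 ∈ l := by
  induction l with
  | nil => simp at h
  | cons y ys ih =>
    rcases eq_or_ne ys [] with rfl | hne
    · simp
    · have := ih hne
      rcases max_choice y (ys.foldr max 0) with h1 | h1 <;> simp [List.foldr, h1, this]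
-- unfolding lemma
lemma gaux_def (a : List ℤ) (i : ℕ) : gaux a i =
    1 + (((List.range i).filter (fun j => decide (a.getD j 0 > a.getD i 0))).attach.map
      (fun j => gaux a j.1)).foldr max 0 := by
  rw [gaux]

lemma gaux_mono (a : List ℤ) {i j : ℕ} (hij : i < j)
    (h : a.getD i 0 > a.getD j 0) : gaux a i < gaux a j := by
  rw [gaux_def a j]
  have hmem : i ∈ (List.range j).filter (fun k => decide (a.getD k 0 > a.getD j 0)) := by
    simp only [List.mem_filter, List.mem_range, decide_eq_true_eq]; exact ⟨hij, h⟩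
  have : gaux a i ∈ (((List.range j).filter
      (fun k => decide (a.getD k 0 > a.getD j 0))).attach.map (fun k => gaux a k.1)) := by
    exact List.mem_map.2 ⟨⟨i, hmem⟩, List.mem_attach _ _, rfl⟩
  have := mem_le_foldr_max this
  omega
lemma gaux_exists_chain (a : List ℤ) : ∀ i : ℕ, ∀ hi : i < a.length,
    ∃ l : List ℤ, l.Sublist (a.take (i+1)) ∧ l.IsChain (· > ·) ∧
      l.length = gaux a i ∧ l.getLast? = some (a.get ⟨i, hi⟩) := by
  intro i
  induction i using Nat.strong_induction_on with
  | _ i ih =>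
    intro hi
    rw [gaux_def]
    set L := ((List.range i).filter (fun j => decide (a.getD j 0 > a.getD i 0))).attach.map
      (fun j => gaux a j.1) with hL
    have htake : a.take (i+1) = a.take i ++ [a.get ⟨i, hi⟩] := by
      rw [List.take_succ]
      simp [List.getElem?_eq_getElem hi, List.get_eq_getElem]
    rcases eq_or_ne L [] with hLnil | hLne
    · refine ⟨[a.get ⟨i, hi⟩], ?_, ?_, ?_, ?_⟩
      · rw [htake]; exact (List.sublist_append_right _ _)
      · simp
      · simp [hLnil]
      · simp
    · have hmem := foldr_max_mem hLne
      rw [hL] at hmem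
      rcases List.mem_map.1 hmem with ⟨⟨j, hj⟩, _, hgj⟩
      have hgj' : gaux a j = L.foldr max 0 := hgj
      simp only [List.mem_filter, List.mem_range, decide_eq_true_eq] at hj
      obtain ⟨hji, hgt⟩ := hj
      have hjlen : j < a.length := lt_trans hji hi
      obtain ⟨l, hsub, hchain, hlen, hlast⟩ := ih j hji hjlen
      refine ⟨l ++ [a.get ⟨i, hi⟩], ?_, ?_, ?_, ?_⟩
      · rw [htake]
        refine List.Sublist.append ?_ (List.Sublist.refl _)
        exact hsub.trans (List.take_prefix_take_left (l := a) (by omega : j+1 ≤ i)).sublist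
      · rw [List.isChain_append]
        refine ⟨hchain, List.isChain_singleton _, ?_⟩
        intro x hx y hy
        simp only [List.head?_cons, Option.mem_def, Option.some.injEq] at hy
        rw [hlast] at hx
        simp only [Option.mem_def, Option.some.injEq] at hx
        subst hx; subst hy
        have h1 : a.getD j 0 = a.get ⟨j, hjlen⟩ := by
          simp [List.getD_eq_getElem?_getD, List.getElem?_eq_getElem hjlen, List.get_eq_getElem]
        have h2 : a.getD i 0 = a.get ⟨i, hi⟩ := by
          simp [List.getD_eq_getElem?_getD, List.getElem?_eq_getElem hi, List.get_eq_getElem]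
        rw [h1, h2] at hgt; exact hgt
      · rw [List.length_append, hlen, ← hgj']; simp [Nat.add_comm]
      · simp
lemma length_le_LDS {a l : List ℤ} (hsub : l.Sublist a) (hchain : l.IsChain (· > ·)) :
    l.length ≤ LDS a := by
  apply mem_le_foldr_max
  apply List.mem_map.2
  refine ⟨l, ?_, rfl⟩
  rw [List.mem_filter]
  exact ⟨List.mem_sublists.2 hsub, by simpa using hchain⟩

lemma gaux_le_LDS (a : List ℤ) {i : ℕ} (hi : i < a.length) : gaux a i ≤ LDS a := by
  obtain ⟨l, hsub, hchain, hlen, _⟩ := gaux_exists_chain a i hi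
  rw [← hlen]
  exact length_le_LDS (hsub.trans (List.take_sublist _ _)) hchain

lemma gaux_pos (a : List ℤ) (i : ℕ) : 1 ≤ gaux a i := by
  rw [gaux_def]; omega

/-- any list of distinct integers can be partitioned into `LDS a`
increasing subsequences: there is a coloring of positions with `LDS a` colors
such that positions of equal color carry strictly increasing values. -/
theorem partition_into_increasing (a : List ℤ) (ha : a.Nodup) :
    ∃ f : Fin a.length → Fin (LDS a),
      ∀ i j : Fin a.length, i < j → f i = f j → a.get i < a.get j := by
  refine ⟨fun i => ⟨gaux a i.1 - 1, ?_⟩, ?_⟩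
  · have h1 := gaux_pos a i.1
    have h2 := gaux_le_LDS a i.2
    omega
  · intro i j hij hf
    have heq : gaux a i.1 = gaux a j.1 := by
      have hval : gaux a i.1 - 1 = gaux a j.1 - 1 := congrArg Fin.val hf
      have h1 := gaux_pos a i.1
      have h2 := gaux_pos a j.1
      omega
    have hne : a.get i ≠ a.get j := by
      intro h
      exact absurd (List.Nodup.get_inj_iff ha |>.1 h) (Fin.ne_of_lt hij)
    rcases lt_or_gt_of_ne hne with h | h
    · exact h
    · exfalso
      have hgt : a.getD i.1 0 > a.getD j.1 0 := by
        have h1 : a.getD i.1 0 = a.get i := by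
          simp [List.getD_eq_getElem?_getD, List.getElem?_eq_getElem i.2, List.get_eq_getElem]
        have h2 : a.getD j.1 0 = a.get j := by
          simp [List.getD_eq_getElem?_getD, List.getElem?_eq_getElem j.2, List.get_eq_getElem]
        rw [h1, h2]; exact h
      have := gaux_mono a hij hgt
      omega
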